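/- Let q ≡ 1 (mod 5) be prime, z ∈ F_q with z ≠ 0,1, and η a multiplicative character of F_q^× of order 5. Then Σ_{s ∈ F_q^×} η^4(s) · Σ_{b ∈ F_q} η(1-b+s)·η^4(1-bz+z^2 s) = q. -/

import Mathlib

open scoped Classical

open Finset in
private lemma inner_sum_ne {F : Type*} [Field F] [Fintype F] (η : MulChar F ℂ)
    (hη5 : ∀ x : F, x ≠ 0 → η x ^ 5 = 1)
    {z s : F} (hz0 : z ≠ 0) (hz1 : z ≠ 1) (hs : s ≠ z⁻¹) :
    ∑ b : F, η (1 - b + s) * (η (1 - b * z + z ^ 2 * s)) ^ 4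
      = ∑ t ∈ univ.erase z⁻¹, η t := by
  have hzs : 1 - z * s ≠ 0 := by
    intro h
    apply hs
    field_simp
    linear_combination -h
  have hz1' : z - 1 ≠ 0 := sub_ne_zero.mpr hz1
  -- each term equals η of the Möbius image
  have hterm : ∀ b : F, η (1 - b + s) * (η (1 - b * z + z ^ 2 * s)) ^ 4
      = η ((1 - b + s) * (1 - b * z + z ^ 2 * s)⁻¹) := by
    intro b
    set v := 1 - b * z + z ^ 2 * s with hv
    by_cases hv0 : v = 0
    · simp [hv0, η.map_nonunit not_isUnit_zero]
    · have hinv : η v⁻¹ = (η v)⁻¹ := by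
        refine eq_inv_of_mul_eq_one_left ?_
        rw [← map_mul, inv_mul_cancel₀ hv0, map_one]
      have hvne : η v ≠ 0 := by
        intro h0
        have h5 := hη5 v hv0
        rw [h0] at h5; simp at h5
      have h4 : (η v) ^ 4 = (η v)⁻¹ := by
        field_simp
        linear_combination hη5 v hv0
      rw [map_mul, hinv, h4]
  simp only [hterm]
  -- split off the pole
  set b₀ : F := (1 + z ^ 2 * s) * z⁻¹ with hb₀
  have hvb : ∀ b : F, 1 - b * z + z ^ 2 * s = z * (b₀ - b) := by
    intro b; rw [hb₀]; field_simp; ring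
  have hpole : 1 - b₀ * z + z ^ 2 * s = 0 := by rw [hvb]; ring
  rw [← Finset.add_sum_erase _ _ (mem_univ b₀)]
  have h0 : η ((1 - b₀ + s) * (1 - b₀ * z + z ^ 2 * s)⁻¹) = 0 := by
    rw [hpole]; simp [η.map_nonunit not_isUnit_zero]
  rw [h0, zero_add]
  -- nonvanishing facts
  have hv0 : ∀ b : F, b ≠ b₀ → 1 - b * z + z ^ 2 * s ≠ 0 := fun b hb => by
    rw [hvb]; exact mul_ne_zero hz0 (sub_ne_zero.mpr (Ne.symm hb))
  have hmne : ∀ b : F, b ≠ b₀ → (1 - b + s) * (1 - b * z + z ^ 2 * s)⁻¹ ≠ z⁻¹ := by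
    intro b hb h
    field_simp [hv0 b hb] at h
    exact absurd (by rw [div_eq_one_iff_eq (by rw [mul_comm s]; exact hv0 b hb)] at h; linear_combination h : (z - 1) * (1 - z * s) = 0)
      (mul_ne_zero hz1' hzs)
  have ht0 : ∀ t : F, t ≠ z⁻¹ → 1 - t * z ≠ 0 := by
    intro t ht h
    apply ht
    field_simp
    linear_combination -h
  have hvj : ∀ t : F, t ≠ z⁻¹ →
      1 - ((1 + s - t * (1 + z ^ 2 * s)) * (1 - t * z)⁻¹) * z + z ^ 2 * s ≠ 0 := by
    intro t ht
    have hd := ht0 t ht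
    have key : (1 - ((1 + s - t * (1 + z ^ 2 * s)) * (1 - t * z)⁻¹) * z + z ^ 2 * s)
        * (1 - t * z) = (1 - z) * (1 - z * s) := by
      field_simp [hd]
      ring
    intro h
    rw [h, zero_mul] at key
    exact absurd key.symm (mul_ne_zero (fun h1 => hz1 (by linear_combination -h1)) hzs)
  -- the bijection between b ≠ b₀ and t ≠ z⁻¹
  refine Finset.sum_nbij' (fun b => (1 - b + s) * (1 - b * z + z ^ 2 * s)⁻¹)
    (fun t => (1 + s - t * (1 + z ^ 2 * s)) * (1 - t * z)⁻¹) ?_ ?_ ?_ ?_ ?_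
  · intro b hb
    exact Finset.mem_erase.mpr ⟨hmne b (Finset.mem_erase.mp hb).1, mem_univ _⟩
  · intro t ht
    refine Finset.mem_erase.mpr ⟨?_, mem_univ _⟩
    intro h
    have h' : (1 + s - t * (1 + z ^ 2 * s)) * (1 - t * z)⁻¹ = b₀ := h
    exact hvj t (Finset.mem_erase.mp ht).1 (by rw [h']; exact hpole)
  · intro b hb
    have hbne := (Finset.mem_erase.mp hb).1
    have hd := ht0 _ (hmne b hbne)
    rw [mul_inv_eq_iff_eq_mul₀ hd]
    linear_combination -(1 - b + s) * mul_inv_cancel₀ (hv0 b hbne)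
  · intro t ht
    have htne := (Finset.mem_erase.mp ht).1
    rw [mul_inv_eq_iff_eq_mul₀ (hvj t htne)]
    field_simp [ht0 t htne]
    ring
  · intro b _; rfl

open Finset in
private lemma inner_sum_eq {F : Type*} [Field F] [Fintype F] (η : MulChar F ℂ)
    (hη5 : ∀ x : F, x ≠ 0 → η x ^ 5 = 1) {z : F} (hz0 : z ≠ 0) :
    ∑ b : F, η (1 - b + z⁻¹) * (η (1 - b * z + z ^ 2 * z⁻¹)) ^ 4
      = ((Fintype.card F : ℂ) - 1) * η z⁻¹ := by
  have hzz : z ^ 2 * z⁻¹ = z := by field_simp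
  have hbij : Function.Bijective (fun b : F => 1 - b * z + z) := by
    rw [Finite.injective_iff_bijective.symm]
    intro a b h
    simp only at h
    have : a * z = b * z := by linear_combination -h
    exact mul_right_cancel₀ hz0 this
  calc ∑ b : F, η (1 - b + z⁻¹) * (η (1 - b * z + z ^ 2 * z⁻¹)) ^ 4
      = ∑ w : F, η (z⁻¹ * w) * (η w) ^ 4 := by
        refine Fintype.sum_bijective _ hbij _ _ fun b => ?_
        rw [hzz]
        congr 2
        show 1 - b + z⁻¹ = z⁻¹ * (1 - b * z + z)
        field_simp
        ring
    _ = ∑ w : F, if w = (0 : F) then 0 else η z⁻¹ := by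
        refine Finset.sum_congr rfl fun w _ => ?_
        by_cases hw : w = 0
        · simp [hw, η.map_nonunit not_isUnit_zero]
        · rw [if_neg hw, map_mul]
          have h45 : η w * (η w) ^ 4 = (η w) ^ 5 := by ring
          rw [mul_assoc, h45, hη5 w hw, mul_one]
    _ = ((Fintype.card F : ℂ) - 1) * η z⁻¹ := by
        rw [Finset.sum_ite, Finset.sum_const_zero, zero_add, Finset.sum_const, nsmul_eq_mul]
        congr 1
        have hfe : Finset.univ.filter (fun w : F => ¬ w = 0) = Finset.univ.erase 0 := by
          ext w; simp [Finset.mem_erase]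
        rw [hfe, Finset.card_erase_of_mem (Finset.mem_univ 0), Finset.card_univ,
          Nat.cast_sub Fintype.card_pos, Nat.cast_one]

theorem double_char_sum_eq_q {F : Type*} [Field F] [Fintype F]
    (hq : (Fintype.card F).Prime) (h5 : Fintype.card F % 5 = 1)
    (z : F) (hz0 : z ≠ 0) (hz1 : z ≠ 1) (η : MulChar F ℂ) (hη : orderOf η = 5) :
    ∑ s ∈ Finset.univ.filter (· ≠ (0 : F)), (η ^ 4) s *
        ∑ b : F, η (1 - b + s) * (η ^ 4) (1 - b * z + z ^ 2 * s) =
      (Fintype.card F : ℂ) := by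
  have hη1 : η ≠ 1 := by
    intro h; rw [h, orderOf_one] at hη; exact absurd hη (by norm_num)
  have hη4 : η ^ 4 ≠ 1 := by
    intro h
    have hd := orderOf_dvd_of_pow_eq_one h
    rw [hη] at hd
    exact absurd hd (by norm_num)
  have hη5 : ∀ x : F, x ≠ 0 → η x ^ 5 = 1 := by
    intro x hx
    have h1 : (η ^ 5) x = 1 := by
      rw [← hη, pow_orderOf_eq_one]
      exact MulChar.one_apply (isUnit_iff_ne_zero.mpr hx)
    rwa [MulChar.pow_apply' η (by norm_num) x] at h1
  simp only [MulChar.pow_apply' η (by norm_num : (4 : ℕ) ≠ 0)]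
  have hzinv : (z⁻¹ : F) ≠ 0 := inv_ne_zero hz0
  have hmem : z⁻¹ ∈ Finset.univ.filter (· ≠ (0 : F)) := by simp [hzinv]
  -- constant value of the inner sum for s ≠ z⁻¹
  have hC : ∑ t ∈ Finset.univ.erase z⁻¹, η t = -η z⁻¹ := by
    have h0 : ∑ t : F, η t = 0 := MulChar.sum_eq_zero_of_ne_one hη1
    have h2 := Finset.add_sum_erase Finset.univ (fun t => η t) (Finset.mem_univ z⁻¹)
    rw [h0] at h2
    linear_combination h2
  -- sum of η^4 over the remaining s
  have hsum4 : ∑ s ∈ (Finset.univ.filter (· ≠ (0 : F))).erase z⁻¹, η s ^ 4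
      = -(η z⁻¹ ^ 4) := by
    have h0 : ∑ s : F, η s ^ 4 = 0 := by
      have h := MulChar.sum_eq_zero_of_ne_one hη4
      simpa [MulChar.pow_apply' η (by norm_num : (4 : ℕ) ≠ 0)] using h
    have hT : Finset.univ.filter (· ≠ (0 : F)) = Finset.univ.erase 0 := by
      ext w; simp [Finset.mem_erase]
    have h1 : ∑ s ∈ Finset.univ.erase (0 : F), η s ^ 4 = 0 := by
      have h2 := Finset.add_sum_erase Finset.univ (fun s => η s ^ 4) (Finset.mem_univ (0 : F))
      rw [h0] at h2
      simpa [η.map_nonunit not_isUnit_zero] using h2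
    rw [hT] at hmem ⊢
    have h3 := Finset.add_sum_erase (Finset.univ.erase (0 : F)) (fun s => η s ^ 4) hmem
    rw [h1] at h3
    linear_combination h3
  rw [← Finset.add_sum_erase _ _ hmem, inner_sum_eq η hη5 hz0]
  have hrest : ∑ s ∈ (Finset.univ.filter (· ≠ (0 : F))).erase z⁻¹,
      η s ^ 4 * ∑ b : F, η (1 - b + s) * η (1 - b * z + z ^ 2 * s) ^ 4
      = ∑ s ∈ (Finset.univ.filter (· ≠ (0 : F))).erase z⁻¹, η s ^ 4 * (-η z⁻¹) := by
    refine Finset.sum_congr rfl fun s hs => ?_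
    rw [inner_sum_ne η hη5 hz0 hz1 (Finset.mem_erase.mp hs).1, hC]
  rw [hrest, ← Finset.sum_mul, hsum4]
  linear_combination (Fintype.card F : ℂ) * hη5 z⁻¹ hzinv
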